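/- Fix ε ∈ (0,1) and set K₂ = (2000/ε)². Let K > K₂ and let ℓ = {0}^{d−1} × ℝ. Suppose x, y ∈ ℝ^d satisfy dist(x, ℓ) < K, dist(y, ℓ) < K, and ‖x − y‖ < 10. Let b < 20 and set x' = (b/K)·x^K_− + ((K−b)/K)·x and y' = (b/K)·y^K_− + ((K−b)/K)·y, where x^K_− (resp. y^K_−) is the lower point of ℓ at distance K from x (resp. y). Then |‖x − y‖ − ‖x' − y'‖| < ε/10. -/

import Mathlib

open Finset

private lemma sq_le_helper {a b : ℝ} (hb : 0 ≤ b) (h : a ^ 2 ≤ b ^ 2) : a ≤ b := by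
  nlinarith [sq_nonneg (a - b), sq_nonneg (a + b)]

private lemma drop_aux {K rx ry sx sy : ℝ} (hrx : 0 ≤ rx) (hry : 0 ≤ ry)
    (hrxK : rx ≤ K) (hryK : ry ≤ K) (h1 : rx - ry < 10) (h2 : ry - rx < 10)
    (hsx : 0 < sx) (hsy : 0 < sy)
    (hx : K ^ 2 = rx ^ 2 + sx ^ 2) (hy : K ^ 2 = ry ^ 2 + sy ^ 2) :
    (sx - sy) ^ 2 ≤ 20 * K := by
  rcases le_total sy sx with h | h
  · nlinarith [mul_nonneg hsy.le (sub_nonneg.2 h), mul_nonneg hrx hry]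
  · nlinarith [mul_nonneg hsx.le (sub_nonneg.2 h), mul_nonneg hrx hry]

private lemma wle_aux {a e t w : ℝ} (ht : 0 < t) (hw : 0 ≤ w)
    (hw2 : w ^ 2 = (a - e) ^ 2) (ha1 : -10 < a) (ha2 : a < 10)
    (hd1 : -(5 * t) ≤ e) (hd2 : e ≤ 5 * t) : w ≤ 10 + 5 * t := by
  refine sq_le_helper (by positivity) ?_
  rw [hw2]
  nlinarith [mul_pos (show (0:ℝ) < 10 + 5 * t - (a - e) by linarith)
    (show (0:ℝ) < 10 + 5 * t + (a - e) by linarith)]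

private lemma fin_aux {ε t : ℝ} (hε0 : 0 < ε) (ht0 : 0 < t)
    (hεt : 2000 < t * ε) (ht2 : 2000 < t) :
    (20 / t ^ 2) * (20 + 5 * t) < ε / 10 := by
  rw [div_mul_eq_mul_div, div_lt_div_iff₀ (by positivity) (by norm_num)]
  nlinarith [mul_lt_mul_of_pos_right hεt ht0]

/-- Elementary moves of the same magnitude almost preserve distances.
Fix `ε ∈ (0,1)`, `K > (2000/ε)²`, and the vertical axis `ℓ = {0}^d × ℝ` in `ℝ^(d+1)`.
Let `x, y` be at distance `< K` from `ℓ` with `‖x - y‖ < 10`, let `xm = x^K_-` and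
`ym = y^K_-` be the lower points of `ℓ` at distance `K` from `x` resp. `y`, let
`0 ≤ b < 20`, and set `x' = (b/K)·xm + (1 - b/K)·x`, `y' = (b/K)·ym + (1 - b/K)·y`.
Then `|‖x - y‖ - ‖x' - y'‖| < ε/10`. -/
theorem stmt_3 {d : ℕ} (ε K : ℝ) (hε : 0 < ε) (hε1 : ε < 1)
    (hK : (2000 / ε) ^ 2 < K)
    (x y : EuclideanSpace ℝ (Fin (d + 1)))
    (hxℓ : Metric.infDist x {p : EuclideanSpace ℝ (Fin (d + 1)) |
      ∀ i : Fin (d + 1), i ≠ Fin.last d → p i = 0} < K)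
    (hyℓ : Metric.infDist y {p : EuclideanSpace ℝ (Fin (d + 1)) |
      ∀ i : Fin (d + 1), i ≠ Fin.last d → p i = 0} < K)
    (hxy : dist x y < 10)
    (xm ym : EuclideanSpace ℝ (Fin (d + 1)))
    (hxmℓ : ∀ i : Fin (d + 1), i ≠ Fin.last d → xm i = 0)
    (hymℓ : ∀ i : Fin (d + 1), i ≠ Fin.last d → ym i = 0)
    (hxmK : dist x xm = K) (hymK : dist y ym = K)
    (hxmlow : xm (Fin.last d) < x (Fin.last d))
    (hymlow : ym (Fin.last d) < y (Fin.last d))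
    (b : ℝ) (hb0 : 0 ≤ b) (hb : b < 20) :
    |dist x y - dist ((b / K) • xm + (1 - b / K) • x)
        ((b / K) • ym + (1 - b / K) • y)| < ε / 10 := by
  have hK0 : (0:ℝ) < K := lt_trans (by positivity) hK
  have nsq : ∀ v : EuclideanSpace ℝ (Fin (d+1)), ‖v‖ ^ 2 = ∑ i, (v i) ^ 2 := by
    intro v
    rw [EuclideanSpace.norm_eq, Real.sq_sqrt (by positivity)]
    simp [sq_abs]
  set L := Fin.last d with hLdef
  set t := Real.sqrt K with htdef
  have ht0 : 0 < t := Real.sqrt_pos.2 hK0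
  have htK : t ^ 2 = K := Real.sq_sqrt hK0.le
  have ht : 2000 / ε < t := by
    have h := Real.sqrt_lt_sqrt (by positivity) hK
    rwa [Real.sqrt_sq (by positivity)] at h
  -- projections onto the hyperplane orthogonal to the axis
  set px : EuclideanSpace ℝ (Fin (d+1)) := WithLp.toLp 2 (fun i => if i = L then 0 else x i) with hpxdef
  set py : EuclideanSpace ℝ (Fin (d+1)) := WithLp.toLp 2 (fun i => if i = L then 0 else y i) with hpydef
  -- Pythagoras for x, xm
  have hKx : K ^ 2 = ‖px‖ ^ 2 + (x L - xm L) ^ 2 := by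
    have h1 : K ^ 2 = ‖x - xm‖ ^ 2 := by rw [← dist_eq_norm, hxmK]
    rw [h1, nsq, nsq, ← Finset.sum_erase_add _ _ (mem_univ L),
      ← Finset.sum_erase_add _ (fun i => (px i) ^ 2) (mem_univ L)]
    have h2 : px L = 0 := by simp [hpxdef]
    have h3 : (x - xm) L = x L - xm L := by simp
    rw [h2, h3]
    have h4 : ∀ i ∈ univ.erase L, ((x - xm) i) ^ 2 = (px i) ^ 2 := by
      intro i hi
      have hne : i ≠ L := Finset.ne_of_mem_erase hi
      simp [hpxdef, hne, hxmℓ i hne]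
    rw [Finset.sum_congr rfl h4]
    ring
  have hKy : K ^ 2 = ‖py‖ ^ 2 + (y L - ym L) ^ 2 := by
    have h1 : K ^ 2 = ‖y - ym‖ ^ 2 := by rw [← dist_eq_norm, hymK]
    rw [h1, nsq, nsq, ← Finset.sum_erase_add _ _ (mem_univ L),
      ← Finset.sum_erase_add _ (fun i => (py i) ^ 2) (mem_univ L)]
    have h2 : py L = 0 := by simp [hpydef]
    have h3 : (y - ym) L = y L - ym L := by simp
    rw [h2, h3]
    have h4 : ∀ i ∈ univ.erase L, ((y - ym) i) ^ 2 = (py i) ^ 2 := by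
      intro i hi
      have hne : i ≠ L := Finset.ne_of_mem_erase hi
      simp [hpydef, hne, hymℓ i hne]
    rw [Finset.sum_congr rfl h4]
    ring
  have hrxK : ‖px‖ ≤ K :=
    sq_le_helper hK0.le (by linarith [sq_nonneg (x L - xm L)])
  have hryK : ‖py‖ ≤ K :=
    sq_le_helper hK0.le (by linarith [sq_nonneg (y L - ym L)])
  -- the projections are close
  have hpq : ‖px - py‖ ≤ dist x y := by
    rw [dist_eq_norm]
    refine sq_le_helper (norm_nonneg _) ?_
    rw [nsq, nsq]
    refine Finset.sum_le_sum fun i _ => ?_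
    by_cases h : i = L
    · have h0 : (px - py) i = 0 := by simp [h, hpxdef, hpydef]
      rw [h0]
      simpa using sq_nonneg ((x - y) i)
    · have h0 : (px - py) i = (x - y) i := by simp [hpxdef, hpydef, h]
      rw [h0]
  have hrxy : |‖px‖ - ‖py‖| < 10 := lt_of_le_of_lt ((abs_norm_sub_norm_le px py).trans hpq) hxy
  obtain ⟨hrxy1, hrxy2⟩ := abs_lt.1 hrxy
  -- bound on the difference of vertical drops
  set sx := x L - xm L with hsxdef
  set sy := y L - ym L with hsydef
  have hsx0 : 0 < sx := sub_pos.2 hxmlow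
  have hsy0 : 0 < sy := sub_pos.2 hymlow
  have hδ : (sx - sy) ^ 2 ≤ 20 * K :=
    drop_aux (norm_nonneg px) (norm_nonneg py) hrxK hryK (by linarith) (by linarith)
      hsx0 hsy0 hKx hKy
  have hδabs : |sx - sy| ≤ 5 * t := by
    refine sq_le_helper (by positivity) ?_
    have h25 : (5 * t) ^ 2 = 25 * K := by rw [← htK]; ring
    rw [sq_abs, h25]
    linarith
  -- bound on ‖xm - ym‖
  have hw2 : ‖xm - ym‖ ^ 2 = (xm L - ym L) ^ 2 := by
    rw [nsq, ← Finset.sum_erase_add _ _ (mem_univ L)]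
    have h0 : ∀ i ∈ univ.erase L, ((xm - ym) i) ^ 2 = 0 := by
      intro i hi
      have hne : i ≠ L := Finset.ne_of_mem_erase hi
      simp [hxmℓ i hne, hymℓ i hne]
    rw [Finset.sum_eq_zero h0]
    simp
  have hxyL : |x L - y L| ≤ dist x y := by
    have h1 : (x L - y L) ^ 2 ≤ (dist x y) ^ 2 := by
      rw [dist_eq_norm, nsq]
      have h0 : (x L - y L) ^ 2 = ((x - y) L) ^ 2 := by simp
      rw [h0]
      exact Finset.single_le_sum (f := fun i => ((x - y) i) ^ 2) (fun i _ => sq_nonneg _) (mem_univ L)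
    refine sq_le_helper dist_nonneg ?_
    rwa [sq_abs]
  have hwle : ‖xm - ym‖ ≤ 10 + 5 * t := by
    have haL : |x L - y L| < 10 := lt_of_le_of_lt hxyL hxy
    obtain ⟨ha1, ha2⟩ := abs_lt.1 haL
    obtain ⟨hd1, hd2⟩ := abs_le.1 hδabs
    have heq : ‖xm - ym‖ ^ 2 = ((x L - y L) - (sx - sy)) ^ 2 := by
      rw [hw2]; congr 1; rw [hsxdef, hsydef]; ring
    exact wle_aux ht0 (norm_nonneg _) heq ha1 ha2 hd1 hd2
  -- algebra for the moved points
  have hx'y' : ((b / K) • xm + (1 - b / K) • x) - ((b / K) • ym + (1 - b / K) • y)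
      = (x - y) + (b / K) • ((xm - ym) - (x - y)) := by
    module
  rw [dist_eq_norm, dist_eq_norm, hx'y']
  have hbK : 0 ≤ b / K := div_nonneg hb0 hK0.le
  have hkey : |‖x - y‖ - ‖(x - y) + (b / K) • ((xm - ym) - (x - y))‖|
      ≤ (b / K) * ‖(xm - ym) - (x - y)‖ := by
    have h0 : (x - y) - ((x - y) + (b / K) • ((xm - ym) - (x - y)))
        = -((b / K) • ((xm - ym) - (x - y))) := by module
    calc |‖x - y‖ - ‖(x - y) + (b / K) • ((xm - ym) - (x - y))‖|
        ≤ ‖(x - y) - ((x - y) + (b / K) • ((xm - ym) - (x - y)))‖ :=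
          abs_norm_sub_norm_le _ _
      _ = (b / K) * ‖(xm - ym) - (x - y)‖ := by
          rw [h0, norm_neg, norm_smul, Real.norm_eq_abs, abs_of_nonneg hbK]
  have hxynorm : ‖x - y‖ < 10 := by rwa [dist_eq_norm] at hxy
  have hdiff : ‖(xm - ym) - (x - y)‖ ≤ 20 + 5 * t := by
    calc ‖(xm - ym) - (x - y)‖ ≤ ‖xm - ym‖ + ‖x - y‖ := norm_sub_le _ _
      _ ≤ (10 + 5 * t) + 10 := by linarith
      _ = 20 + 5 * t := by ring
  have hstep : (b / K) * ‖(xm - ym) - (x - y)‖ ≤ (20 / t ^ 2) * (20 + 5 * t) := by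
    have h1 : b / K ≤ 20 / t ^ 2 := by
      rw [htK]
      exact (div_le_div_iff_of_pos_right hK0).2 hb.le
    exact mul_le_mul h1 hdiff (norm_nonneg _) (by positivity)
  have hεt : 2000 < t * ε := (div_lt_iff₀ hε).1 ht
  have ht2000 : 2000 < t := by
    have h2 : (2000:ℝ) ≤ 2000 / ε := by
      rw [le_div_iff₀ hε]
      have h3 : 2000 * ε ≤ 2000 * 1 := mul_le_mul_of_nonneg_left hε1.le (by norm_num)
      linarith
    linarith
  have hfin : (20 / t ^ 2) * (20 + 5 * t) < ε / 10 := fin_aux hε ht0 hεt ht2000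
  calc |‖x - y‖ - ‖(x - y) + (b / K) • ((xm - ym) - (x - y))‖|
      ≤ (b / K) * ‖(xm - ym) - (x - y)‖ := hkey
    _ ≤ (20 / t ^ 2) * (20 + 5 * t) := hstep
    _ < ε / 10 := hfin
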